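/- There is no bijection f from ZMod 12 to the vertex set of the icosahedron graph such that for every x in ZMod 12, the vertex f(x) is adjacent both to f(x+1) and to f(x+2). (Prohibition Lemma: no labeling of the icosahedron's vertices by the 12 tones makes every tone adjacent to the tones one and two semitones away from it.) -/

import Mathlib

noncomputable section

/-- Points of `ℝ³` with the Euclidean metric. -/
abbrev E3 : Type := EuclideanSpace ℝ (Fin 3)

/-- Constructor for explicit points of `E3`. -/
def pt (a b c : ℝ) : E3 := (WithLp.equiv 2 (Fin 3 → ℝ)).symm ![a, b, c]

/-- The vertex set of the regular icosahedron with edge length 2: the twelve points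
`(0,±1,±φ)`, `(±1,±φ,0)`, `(±φ,0,±1)` where `φ` is the golden ratio. -/
def icoVertexSet : Set E3 :=
  {p | ∃ a b : ℝ, (a = 1 ∨ a = -1) ∧ (b = Real.goldenRatio ∨ b = -Real.goldenRatio) ∧
    (p = pt 0 a b ∨ p = pt a b 0 ∨ p = pt b 0 a)}

/-- The type of vertices of the icosahedron. -/
abbrev IcoVert : Type := {p : E3 // p ∈ icoVertexSet}

/-- The icosahedron graph: two vertices are adjacent iff their Euclidean distance
equals 2 (the edge length). -/
def icoGraph : SimpleGraph IcoVert where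
  Adj u v := dist (u : E3) (v : E3) = 2
  symm := by constructor; intro u v h; rwa [dist_comm] at h
  loopless := by constructor; intro u h; rw [dist_self] at h; norm_num at h

/-- The chromatic neighboring condition. -/
def Chromatic (f : ZMod 12 → IcoVert) : Prop :=
  ∀ x : ZMod 12, icoGraph.Adj (f x) (f (x + 1))

/-- The Pythagorean-chain neighboring condition. -/
def Pythagorean (f : ZMod 12 → IcoVert) : Prop :=
  ∀ x : ZMod 12, icoGraph.Adj (f x) (f (x + 7))

/-- The whole-tone neighboring condition for the whole tone scale containing `C`. -/
def WholeToneEven (f : ZMod 12 → IcoVert) : Prop :=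
  ∀ x : ZMod 12, Even x → icoGraph.Adj (f x) (f (x + 2))

/-- The whole-tone neighboring condition for the whole tone scale containing `C♯`. -/
def WholeToneOdd (f : ZMod 12 → IcoVert) : Prop :=
  ∀ x : ZMod 12, Odd x → icoGraph.Adj (f x) (f (x + 2))

/-- A chromatic/whole tone musical icosahedron. -/
def ChromaticWT (f : ZMod 12 → IcoVert) : Prop :=
  Chromatic f ∧ (WholeToneEven f ∨ WholeToneOdd f)

/-- A Pythagorean/whole tone musical icosahedron. -/
def PythagoreanWT (f : ZMod 12 → IcoVert) : Prop :=
  Pythagorean f ∧ (WholeToneEven f ∨ WholeToneOdd f)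

/-- Musical isomorphism: post-composition with a graph automorphism. -/
def MusIso (f g : ZMod 12 → IcoVert) : Prop :=
  ∃ σ : icoGraph ≃g icoGraph, ∀ x : ZMod 12, g x = σ (f x)

/-- Hexagon-icosahedron symmetry: raising all tones by a whole tone corresponds to a
symmetry transformation of the icosahedron. -/
def HexSym (f : ZMod 12 → IcoVert) : Prop :=
  ∃ σ : icoGraph ≃g icoGraph, ∀ x : ZMod 12, f (x + 2) = σ (f x)

/-- Three points form a golden triangle: pairwise distances `2φ, 2φ, 2`. -/
def IsGoldenTriangle (p q r : E3) : Prop :=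
  ({dist p q, dist q r, dist p r} : Multiset ℝ) =
    ({2 * Real.goldenRatio, 2 * Real.goldenRatio, 2} : Multiset ℝ)

/-- Three points form a golden gnomon: pairwise distances `2, 2, 2φ`. -/
def IsGoldenGnomon (p q r : E3) : Prop :=
  ({dist p q, dist q r, dist p r} : Multiset ℝ) =
    ({2, 2, 2 * Real.goldenRatio} : Multiset ℝ)

/- ### Auxiliary material for the prohibition lemma -/


lemma aux_dist_pt (a b c d e f : ℝ) :
    dist (pt a b c) (pt d e f) = Real.sqrt ((a-d)^2+(b-e)^2+(c-f)^2) := by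
  rw [EuclideanSpace.dist_eq]
  congr 1
  simp [pt, Fin.sum_univ_three, Real.dist_eq, sq_abs]

lemma aux_dist_pt_eq_two_iff (a b c d e f : ℝ) :
    dist (pt a b c) (pt d e f) = 2 ↔ (a-d)^2+(b-e)^2+(c-f)^2 = 4 := by
  rw [aux_dist_pt]
  constructor
  · intro h
    nlinarith [Real.sq_sqrt (show (0:ℝ) ≤ (a-d)^2+(b-e)^2+(c-f)^2 by positivity), h]
  · intro h
    rw [h, show (4:ℝ) = 2^2 by norm_num, Real.sqrt_sq (by norm_num)]

def icoP : ℕ → E3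
  | 0 => pt 0 1 Real.goldenRatio
  | 1 => pt 1 Real.goldenRatio 0
  | 2 => pt Real.goldenRatio 0 1
  | 3 => pt 0 1 (-Real.goldenRatio)
  | 4 => pt 1 (-Real.goldenRatio) 0
  | 5 => pt (-Real.goldenRatio) 0 1
  | 6 => pt 0 (-1) Real.goldenRatio
  | 7 => pt (-1) Real.goldenRatio 0
  | 8 => pt Real.goldenRatio 0 (-1)
  | 9 => pt 0 (-1) (-Real.goldenRatio)
  | 10 => pt (-1) (-Real.goldenRatio) 0
  | 11 => pt (-Real.goldenRatio) 0 (-1)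
  | _ => pt 0 0 0

def icoMask : ℕ → ℕ
  | 0 => 230 | 1 => 397 | 2 => 339 | 3 => 2946 | 4 => 1860 | 5 => 3265
  | 6 => 1077 | 7 => 2091 | 8 => 542 | 9 => 3352 | 10 => 2672 | 11 => 1704
  | _ => 0

def adjB (i j : ℕ) : Bool := (icoMask i >>> j) % 2 == 1

def nxt (a b c : ℕ) : ℕ :=
  (((List.range 12).filter fun e => adjB b e && adjB c e && !(e == a))).headD 0

def stp : ℕ × ℕ × ℕ → ℕ × ℕ × ℕ := fun t => (t.2.1, t.2.2, nxt t.1 t.2.1 t.2.2)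

lemma aux_uniq_nxt : ∀ a b c e : Fin 12, adjB b c = true → adjB a b = true →
    adjB a c = true → adjB b e = true → adjB c e = true → (e:ℕ) ≠ (a:ℕ) →
    (e:ℕ) = nxt a b c := by decide

lemma aux_noCycle : ∀ a b c : Fin 12, adjB a b = true → adjB a c = true →
    adjB b c = true →
    ¬ ((List.range 12).map fun n => (stp^[n] ((a:ℕ),(b:ℕ),(c:ℕ))).2.1).Nodup := by decide

lemma aux_surj (v : E3) (hv : v ∈ icoVertexSet) : ∃ i : Fin 12, icoP (i : ℕ) = v := by
  obtain ⟨a, b, (rfl|rfl), (rfl|rfl), (rfl|rfl|rfl)⟩ := hv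
  · exact ⟨0, rfl⟩
  · exact ⟨1, rfl⟩
  · exact ⟨2, rfl⟩
  · exact ⟨3, rfl⟩
  · exact ⟨4, rfl⟩
  · exact ⟨5, rfl⟩
  · exact ⟨6, rfl⟩
  · exact ⟨7, rfl⟩
  · exact ⟨8, rfl⟩
  · exact ⟨9, rfl⟩
  · exact ⟨10, rfl⟩
  · exact ⟨11, rfl⟩

set_option maxHeartbeats 1600000 in
lemma aux_adj_to_mat (i j : Fin 12) (h : dist (icoP (i:ℕ)) (icoP (j:ℕ)) = 2) :
    adjB (i:ℕ) (j:ℕ) = true := by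
  fin_cases i <;> fin_cases j <;>
    first
      | rfl
      | (exfalso
         simp only [icoP, Real.goldenRatio] at h
         rw [aux_dist_pt_eq_two_iff] at h
         nlinarith [Real.sq_sqrt (show (0:ℝ) ≤ 5 by norm_num), Real.sqrt_nonneg 5, h])


/-- **Prohibition Lemma.** There is no bijection from `ZMod 12` to the vertices of the
icosahedron graph mapping every tone adjacent to the tones one and two semitones above it. -/
theorem prohibition_lemma :
    ¬ ∃ f : ZMod 12 → IcoVert, Function.Bijective f ∧
      ∀ x : ZMod 12,
        icoGraph.Adj (f x) (f (x + 1)) ∧ icoGraph.Adj (f x) (f (x + 2)) := by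
  rintro ⟨f, hf, hadj⟩
  -- index function
  choose g hg using fun x : ZMod 12 => aux_surj (f x).1 (f x).2
  -- g is injective (composed with coercion to ℕ)
  have hginj : ∀ x y : ZMod 12, ((g x : ℕ) = (g y : ℕ)) → x = y := by
    intro x y hxy
    apply hf.1
    apply Subtype.ext
    rw [← hg x, ← hg y, hxy]
  -- adjacency facts
  have hA1 : ∀ x : ZMod 12, adjB (g x) (g (x+1)) = true := by
    intro x
    apply aux_adj_to_mat
    rw [hg x, hg (x+1)]
    exact (hadj x).1
  have hA2 : ∀ x : ZMod 12, adjB (g x) (g (x+2)) = true := by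
    intro x
    apply aux_adj_to_mat
    rw [hg x, hg (x+2)]
    exact (hadj x).2
  -- the recurrence
  have hrec : ∀ x : ZMod 12, ((g (x+2) : ℕ)) = nxt (g (x-1)) (g x) (g (x+1)) := by
    intro x
    apply aux_uniq_nxt (g (x-1)) (g x) (g (x+1)) (g (x+2))
    · exact hA1 x
    · have := hA1 (x-1); rwa [show x - 1 + 1 = x by ring] at this
    · have := hA2 (x-1); rwa [show x - 1 + 2 = x + 1 by ring] at this
    · exact hA2 x
    · have := hA1 (x+1); rwa [show x + 1 + 1 = x + 2 by ring] at this
    · intro hcontra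
      have : x + 2 = x - 1 := hginj _ _ hcontra
      have h3 : (3 : ZMod 12) = 0 := by linear_combination this
      exact absurd h3 (by decide)
  -- iterates follow g
  have hiter : ∀ n : ℕ, stp^[n] ((g (-1) : ℕ), (g 0 : ℕ), (g 1 : ℕ)) =
      ((g ((n : ZMod 12) - 1) : ℕ), (g (n : ZMod 12) : ℕ), (g ((n : ZMod 12) + 1) : ℕ)) := by
    intro n
    induction n with
    | zero => norm_num
    | succ m ih =>
      rw [Function.iterate_succ_apply', ih]
      have e1 : ((m + 1 : ℕ) : ZMod 12) - 1 = (m : ZMod 12) := by push_cast; ring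
      have e2 : ((m + 1 : ℕ) : ZMod 12) = (m : ZMod 12) + 1 := by push_cast; ring
      have e3 : ((m + 1 : ℕ) : ZMod 12) + 1 = (m : ZMod 12) + 2 := by push_cast; ring
      rw [e1, e3, e2, hrec (m : ZMod 12)]
      rfl
  -- Nodup list
  have hAm1 : adjB (g (-1)) (g 0) = true := by
    have := hA1 (-1); rwa [show (-1 : ZMod 12) + 1 = 0 by decide] at this
  have hAm2 : adjB (g (-1)) (g 1) = true := by
    have := hA2 (-1); rwa [show (-1 : ZMod 12) + 2 = 1 by decide] at this
  have hA01 : adjB (g 0) (g 1) = true := hA1 0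
  apply aux_noCycle (g (-1)) (g 0) (g 1) hAm1 hAm2 hA01
  have hmap : ((List.range 12).map fun n => (stp^[n] ((g (-1):ℕ), (g 0:ℕ), (g 1:ℕ))).2.1) =
      (List.range 12).map (fun n : ℕ => (g ((Nat.cast n : ZMod 12)) : ℕ)) := by
    apply List.map_congr_left
    intro n _
    rw [hiter n]
  rw [hmap]
  apply List.Nodup.map_on _ (List.nodup_range (n := 12))
  intro x hx y hy hxy
  have : (x : ZMod 12) = (y : ZMod 12) := by
    exact_mod_cast hginj _ _ hxy
  have hmod := (ZMod.natCast_eq_natCast_iff x y 12).mp this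
  rw [List.mem_range] at hx hy
  have hmm : x % 12 = y % 12 := hmod
  omega


end
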